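/- Let K = ℚ(√D) with D ≥ 2 squarefree, let i ≥ -1 be odd, 0 ≤ r ≤ u_{i+2} - 1, and let β_j = α_{i,r} be the corresponding semiconvergent indecomposable. Then the number of partitions of 2β_j into indecomposable totally positive parts equals min{r+1, u_{i+2}-r+1}, and the number of partitions of β_j + β_{j+1} into indecomposable parts equals min{r+1, u_{i+2}-r}. -/

import Mathlib

noncomputable section

/-- `ω_D`: the standard generator of the ring of integers of `ℚ(√D)`. -/
def omegaD (D : ℕ) : ℝ := if D % 4 = 1 then (1 + Real.sqrt D) / 2 else Real.sqrt D

/-- The Galois conjugate of `ω_D`. -/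
def omegaD' (D : ℕ) : ℝ := if D % 4 = 1 then (1 - Real.sqrt D) / 2 else -Real.sqrt D

/-- Elements of `O_K` in coordinates: `(x, y)` represents `x + y·ω_D`. -/
abbrev OK : Type := ℤ × ℤ

/-- First real embedding. -/
def emb1 (D : ℕ) (a : OK) : ℝ := a.1 + a.2 * omegaD D

/-- Second real embedding (Galois conjugate). -/
def emb2 (D : ℕ) (a : OK) : ℝ := a.1 + a.2 * omegaD' D

/-- Galois conjugation on `O_K`. -/
def conjOK (D : ℕ) (a : OK) : OK := (a.1 + (if D % 4 = 1 then (1 : ℤ) else 0) * a.2, -a.2)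

/-- Total positivity. -/
def TotPos (D : ℕ) (a : OK) : Prop := 0 < emb1 D a ∧ 0 < emb2 D a

/-- The field norm. -/
def Nm (D : ℕ) (a : OK) : ℝ := emb1 D a * emb2 D a

/-- Indecomposability: totally positive and not a sum of two totally positive elements. -/
def Indec (D : ℕ) (a : OK) : Prop :=
  TotPos D a ∧ ¬ ∃ b c : OK, TotPos D b ∧ TotPos D c ∧ a = b + c

/-- Number of partitions of `α` into indecomposable parts (`p_K(α|I)`). -/
def pKI (D : ℕ) (α : OK) : ℕ :=
  Set.ncard {s : Multiset OK | (∀ x ∈ s, Indec D x) ∧ s.sum = α}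

/-- Number of partitions of `α` into totally positive parts (`p_K(α)`). -/
def pK (D : ℕ) (α : OK) : ℕ :=
  Set.ncard {s : Multiset OK | (∀ x ∈ s, TotPos D x) ∧ s.sum = α}

/-- Discriminant of `ℚ(√D)`. -/
def disc (D : ℕ) : ℕ := if D % 4 = 1 then D else 4 * D

/-- The ordered two-sided sequence of indecomposables together with
the coefficients `v j ≥ 2` from the Hejda–Kala relation `v_j β_j = β_{j-1} + β_{j+1}`. -/
structure BetaSeq (D : ℕ) (β : ℤ → OK) (v : ℤ → ℤ) : Prop where
  indec : ∀ j, Indec D (β j)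
  surj : ∀ a : OK, Indec D a → ∃ j, β j = a
  mono : StrictMono fun j => emb1 D (β j)
  zero : β 0 = (1, 0)
  conj_eq : ∀ j, β (-j) = conjOK D (β j)
  v_two_le : ∀ j, 2 ≤ v j
  v_symm : ∀ j, v (-j) = v j
  rel : ∀ j, v j • β j = β (j - 1) + β (j + 1)

/-- The continued fraction data of `ω_D = [⌈u₀/2⌉, \overline{u₁, …, u_s}]` (with `u_s = u_0`),
with tails `γ_0 = ω_D`, `γ_i = [u_i, u_{i+1}, …]` for `i ≥ 1`. -/
structure CFData (D : ℕ) (u : ℕ → ℕ) (γ : ℕ → ℝ) : Prop where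
  gamma_zero : γ 0 = omegaD D
  u_zero : (u 0 : ℤ) = 2 * ⌊omegaD D⌋ - (if D % 4 = 1 then 1 else 0)
  head : omegaD D = (⌊omegaD D⌋ : ℝ) + 1 / γ 1
  step : ∀ i, 1 ≤ i → γ i = u i + 1 / γ (i + 1)
  one_lt : ∀ i, 1 ≤ i → 1 < γ i
  floor_eq : ∀ i, 1 ≤ i → (u i : ℤ) = ⌊γ i⌋
  period : ∃ s, 1 ≤ s ∧ u s = u 0 ∧ ∀ i, 1 ≤ i → u (i + s) = u i

/-- The convergents `α_i = p_i + q_i ξ_D`, indexed by `i ≥ -1`. -/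
structure ConvData (D : ℕ) (u : ℕ → ℕ) (a : ℤ → OK) : Prop where
  neg_one : a (-1) = (1, 0)
  zero : a 0 = (⌊omegaD D⌋, 0) + (if D % 4 = 1 then ((-1 : ℤ), (1 : ℤ)) else (0, 1))
  recur : ∀ i : ℤ, -1 ≤ i → a (i + 2) = (u (i + 2).toNat : ℤ) • a (i + 1) + a i

/-- Semiconvergents `α_{i,r} = α_i + r·α_{i+1}`. -/
def semiconv (a : ℤ → OK) (i r : ℤ) : OK := a i + r • a (i + 1)

namespace Stmt3Aux

def det2 (p q : OK) : ℤ := p.1 * q.2 - p.2 * q.1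

lemma ok_ext {x y : OK} (h1 : x.1 = y.1) (h2 : x.2 = y.2) : x = y := Prod.ext h1 h2

@[simp] lemma sm_fst (c : ℤ) (x : OK) : (c • x).1 = c * x.1 := rfl
@[simp] lemma sm_snd (c : ℤ) (x : OK) : (c • x).2 = c * x.2 := rfl
@[simp] lemma ad_fst (x y : OK) : (x + y).1 = x.1 + y.1 := rfl
@[simp] lemma ad_snd (x y : OK) : (x + y).2 = x.2 + y.2 := rfl
@[simp] lemma sb_fst (x y : OK) : (x - y).1 = x.1 - y.1 := rfl
@[simp] lemma sb_snd (x y : OK) : (x - y).2 = x.2 - y.2 := rfl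

lemma emb1_add (D : ℕ) (x y : OK) : emb1 D (x + y) = emb1 D x + emb1 D y := by
  simp only [emb1, ad_fst, ad_snd, Int.cast_add]; ring

lemma emb1_smul (D : ℕ) (c : ℤ) (x : OK) : emb1 D (c • x) = c * emb1 D x := by
  simp only [emb1, sm_fst, sm_snd, Int.cast_mul]; ring

lemma emb2_add (D : ℕ) (x y : OK) : emb2 D (x + y) = emb2 D x + emb2 D y := by
  simp only [emb2, ad_fst, ad_snd, Int.cast_add]; ring

lemma emb2_smul (D : ℕ) (c : ℤ) (x : OK) : emb2 D (c • x) = c * emb2 D x := by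
  simp only [emb2, sm_fst, sm_snd, Int.cast_mul]; ring

lemma emb1_sub (D : ℕ) (x y : OK) : emb1 D (x - y) = emb1 D x - emb1 D y := by
  simp only [emb1, sb_fst, sb_snd, Int.cast_sub]; ring

lemma emb2_sub (D : ℕ) (x y : OK) : emb2 D (x - y) = emb2 D x - emb2 D y := by
  simp only [emb2, sb_fst, sb_snd, Int.cast_sub]; ring

lemma basisRep {p q : OK} (hdet : det2 p q = 1) (g : OK) :
    g = (g.1 * q.2 - g.2 * q.1) • p + (p.1 * g.2 - p.2 * g.1) • q := by
  unfold det2 at hdet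
  refine ok_ext ?_ ?_ <;> simp only [ad_fst, ad_snd, sm_fst, sm_snd]
  · linear_combination -g.1 * hdet
  · linear_combination -g.2 * hdet

lemma rec_mono (g V : ℕ → ℤ) (hV : ∀ m, 2 ≤ V m)
    (hrec : ∀ m, g (m + 2) = V m * g (m + 1) - g m)
    (h0 : 1 ≤ g 0) (h01 : g 0 ≤ g 1) : ∀ m, 1 ≤ g m ∧ g m ≤ g (m + 1) := by
  intro m
  induction m with
  | zero => exact ⟨h0, h01⟩
  | succ k ih =>
    refine ⟨le_trans ih.1 ih.2, ?_⟩
    rw [hrec k]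
    nlinarith [hV k, ih.1, ih.2]

lemma rec_mono_le (g V : ℕ → ℤ) (hV : ∀ m, 2 ≤ V m)
    (hrec : ∀ m, g (m + 2) = V m * g (m + 1) - g m)
    (h0 : 1 ≤ g 0) (h01 : g 0 ≤ g 1) : ∀ m m', m ≤ m' → g m ≤ g m' := by
  intro m m' h
  induction m' with
  | zero => simp_all
  | succ k ih =>
    rcases Nat.lt_or_ge m (k+1) with h'|h'
    · exact le_trans (ih (by omega)) (rec_mono g V hV hrec h0 h01 k).2
    · have : m = k + 1 := by omega
      subst this; rfl

section Seq

variable {D : ℕ} {u : ℕ → ℕ} {γ : ℕ → ℝ} {a : ℤ → OK}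

def bseq (a : ℤ → OK) (m : ℕ) : OK := a ((m : ℤ) - 1)

def Qp (γ : ℕ → ℝ) (m : ℕ) : ℝ := ∏ k ∈ Finset.range m, (γ (k + 1))⁻¹

lemma gamma_gt (hCF : CFData D u γ) (m : ℕ) : 1 < γ (m + 1) := hCF.one_lt _ (by omega)

lemma Qp_pos (hCF : CFData D u γ) (m : ℕ) : 0 < Qp γ m :=
  Finset.prod_pos fun k _ => inv_pos.2 (lt_trans one_pos (gamma_gt hCF k))

lemma Qp_succ (γ : ℕ → ℝ) (m : ℕ) : Qp γ (m + 1) = Qp γ m * (γ (m + 1))⁻¹ :=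
  Finset.prod_range_succ _ _

lemma Qp_dec (hCF : CFData D u γ) (m : ℕ) : Qp γ (m + 1) < Qp γ m := by
  rw [Qp_succ]
  have h1 := gamma_gt hCF m
  have h2 := Qp_pos hCF m
  have : (γ (m+1))⁻¹ < 1 := by
    rw [inv_lt_one_iff₀]; right; exact h1
  nlinarith

lemma Qp_step (hCF : CFData D u γ) (m : ℕ) :
    Qp γ m = (u (m + 1) : ℝ) * Qp γ (m + 1) + Qp γ (m + 2) := by
  have hs := hCF.step (m + 1) (by omega)
  have h1 : (1:ℝ) < γ (m+1) := gamma_gt hCF m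
  have h2 : (1:ℝ) < γ (m+2) := gamma_gt hCF (m+1)
  have e1 : Qp γ (m+1) = Qp γ m * (γ (m+1))⁻¹ := Qp_succ γ m
  have e2 : Qp γ (m+2) = Qp γ (m+1) * (γ (m+2))⁻¹ := Qp_succ γ (m+1)
  have hne1 : γ (m+1) ≠ 0 := by positivity
  have hne2 : γ (m+2) ≠ 0 := by positivity
  field_simp at e1 e2 ⊢
  rw [hs] at e1
  field_simp at e1
  nlinarith [e1, e2]

lemma u_pos (hCF : CFData D u γ) (m : ℕ) : 1 ≤ u (m + 1) := by
  have h := hCF.floor_eq (m+1) (by omega)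
  have h2 : (1:ℤ) ≤ ⌊γ (m+1)⌋ := Int.le_floor.2 (by exact_mod_cast (gamma_gt hCF m).le)
  omega

lemma bseq_zero (hconv : ConvData D u a) : bseq a 0 = (1, 0) := by
  have : ((0:ℕ) : ℤ) - 1 = -1 := by norm_num
  rw [bseq, this, hconv.neg_one]

lemma bseq_one_snd (hconv : ConvData D u a) : (bseq a 1).2 = 1 := by
  have : ((1:ℕ) : ℤ) - 1 = 0 := by norm_num
  rw [bseq, this, hconv.zero]
  split <;> rfl

lemma bseq_rec (hconv : ConvData D u a) (m : ℕ) :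
    bseq a (m + 2) = (u (m + 1) : ℤ) • bseq a (m + 1) + bseq a m := by
  have h := hconv.recur ((m : ℤ) - 1) (by omega)
  have e1 : ((m : ℤ) - 1) + 2 = ((m + 2 : ℕ) : ℤ) - 1 := by push_cast; ring
  have e2 : ((m : ℤ) - 1) + 1 = ((m + 1 : ℕ) : ℤ) - 1 := by push_cast; ring
  have e4 : (((m + 2 : ℕ) : ℤ) - 1).toNat = m + 1 := by omega
  rw [e1, e2, e4] at h
  exact h

end Seq

end Stmt3Aux


namespace Stmt3Aux

lemma omega_gt_one {D : ℕ} (hD : 2 ≤ D) : 1 < omegaD D := by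
  have hDr : (2:ℝ) ≤ (D:ℝ) := by exact_mod_cast hD
  have hsq := Real.sq_sqrt (show (0:ℝ) ≤ (D:ℝ) by linarith)
  have hnn := Real.sqrt_nonneg (D:ℝ)
  unfold omegaD
  split
  · rename_i h
    have h5 : (5:ℝ) ≤ (D:ℝ) := by exact_mod_cast (show 5 ≤ D by omega)
    nlinarith
  · nlinarith

lemma floor_omega_pos {D : ℕ} (hD : 2 ≤ D) : 1 ≤ ⌊omegaD D⌋ :=
  Int.le_floor.2 (by exact_mod_cast (omega_gt_one hD).le)

lemma sqrtD_irr {D : ℕ} (hD : 2 ≤ D) (hsq : Squarefree D) : Irrational (Real.sqrt D) := by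
  refine irrational_sqrt_natCast_iff.mpr ?_
  rintro ⟨m, hm⟩
  have hu : IsUnit m := hsq m (by rw [hm])
  rw [Nat.isUnit_iff] at hu
  subst hu hm
  omega

lemma omegaD'_irr {D : ℕ} (hD : 2 ≤ D) (hsq : Squarefree D) : Irrational (omegaD' D) := by
  have h := sqrtD_irr hD hsq
  unfold omegaD'
  split
  · have h1 : Irrational (((1:ℤ):ℝ) - Real.sqrt D) := h.intCast_sub 1
    have h2 : Irrational ((((1:ℤ):ℝ) - Real.sqrt D) / ((2:ℤ):ℝ)) :=
      h1.div_intCast (by norm_num)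
    simpa using h2
  · exact h.neg

lemma emb2_inj {D : ℕ} (hD : 2 ≤ D) (hsq : Squarefree D) {x y : OK}
    (h : emb2 D x = emb2 D y) : x = y := by
  unfold emb2 at h
  by_cases h2 : x.2 = y.2
  · refine ok_ext ?_ h2
    rw [h2] at h
    have : (x.1 : ℝ) = (y.1 : ℝ) := by linarith
    exact_mod_cast this
  · exfalso
    have he : ((x.2 - y.2 : ℤ) : ℝ) * omegaD' D = ((y.1 - x.1 : ℤ) : ℝ) := by
      push_cast; linarith
    have hi : Irrational (((x.2 - y.2 : ℤ) : ℝ) * omegaD' D) :=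
      (omegaD'_irr hD hsq).intCast_mul (sub_ne_zero.2 h2)
    rw [he] at hi
    exact (y.1 - x.1).not_irrational hi

end Stmt3Aux

namespace Stmt3Aux

section Seq2

variable {D : ℕ} {u : ℕ → ℕ} {γ : ℕ → ℝ} {a : ℤ → OK}

lemma emb1_b1 {D : ℕ} (hD : 2 ≤ D) (hconv : ConvData D u a) :
    1 < emb1 D (bseq a 1) := by
  have h0 : ((1:ℕ) : ℤ) - 1 = 0 := by norm_num
  have hfl : (1:ℝ) ≤ (⌊omegaD D⌋ : ℝ) := by exact_mod_cast floor_omega_pos hD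
  have hom := omega_gt_one hD
  rw [bseq, h0, hconv.zero]
  unfold emb1
  split <;> simp only [ad_fst, ad_snd] <;> push_cast <;> linarith

lemma emb2_b1 (hD : 2 ≤ D) (hconv : ConvData D u a) :
    emb2 D (bseq a 1) = (⌊omegaD D⌋ : ℝ) - omegaD D := by
  have h0 : ((1:ℕ) : ℤ) - 1 = 0 := by norm_num
  rw [bseq, h0, hconv.zero]
  unfold emb2 omegaD omegaD'
  split <;> simp only [ad_fst, ad_snd] <;> push_cast <;> ring

lemma emb2_bseq (hD : 2 ≤ D) (hCF : CFData D u γ) (hconv : ConvData D u a) :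
    ∀ m, emb2 D (bseq a m) = (-1 : ℝ) ^ m * Qp γ m := by
  have key : ∀ m, emb2 D (bseq a m) = (-1 : ℝ) ^ m * Qp γ m ∧
      emb2 D (bseq a (m+1)) = (-1 : ℝ) ^ (m+1) * Qp γ (m+1) := by
    intro m
    induction m with
    | zero =>
      constructor
      · rw [bseq_zero hconv]
        simp [emb2, Qp]
      · have hQ : Qp γ 1 = (γ 1)⁻¹ := by simp [Qp]
        rw [emb2_b1 hD hconv, hQ]
        have h2 : (⌊omegaD D⌋ : ℝ) - omegaD D = -(1 / γ 1) := by linarith [hCF.head]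
        rw [h2]
        norm_num
    | succ k ih =>
      refine ⟨ih.2, ?_⟩
      rw [bseq_rec hconv k, emb2_add, emb2_smul, ih.1, ih.2]
      have hstep := Qp_step hCF k
      push_cast
      linear_combination ((-1 : ℝ) ^ k) * hstep
  exact fun m => (key m).1

lemma emb1_bseq (hD : 2 ≤ D) (hCF : CFData D u γ) (hconv : ConvData D u a) :
    ∀ m, 0 < emb1 D (bseq a m) ∧ emb1 D (bseq a m) < emb1 D (bseq a (m+1)) := by
  intro m
  induction m with
  | zero =>
    rw [bseq_zero hconv]
    have := emb1_b1 hD hconv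
    have he : emb1 D ((1 : ℤ), (0 : ℤ)) = 1 := by simp [emb1]
    rw [he]
    exact ⟨one_pos, this⟩
  | succ k ih =>
    have h1 : (1:ℝ) ≤ (u (k+1) : ℝ) := by exact_mod_cast u_pos hCF k
    constructor
    · linarith [ih.1, ih.2]
    · rw [bseq_rec hconv k, emb1_add, emb1_smul]
      have h2 : emb1 D (bseq a (k+1)) ≤ (u (k+1) : ℝ) * emb1 D (bseq a (k+1)) := by
        nlinarith [lt_trans ih.1 ih.2]
      push_cast
      linarith [ih.1]

lemma det_bseq (hconv : ConvData D u a) :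
    ∀ m, det2 (bseq a m) (bseq a (m+1)) = (-1 : ℤ) ^ m := by
  intro m
  induction m with
  | zero =>
    rw [bseq_zero hconv]
    unfold det2
    rw [bseq_one_snd hconv]
    simp
  | succ k ih =>
    rw [bseq_rec hconv k]
    unfold det2 at ih ⊢
    simp only [ad_fst, ad_snd, sm_fst, sm_snd]
    rw [pow_succ]
    linear_combination (-1 : ℤ) * ih

end Seq2

end Stmt3Aux

namespace Stmt3Aux

section Geom

variable {D : ℕ} {u : ℕ → ℕ} {γ : ℕ → ℝ} {a : ℤ → OK}

/-- semiconvergents along the pair `(b n, b (n+1))` -/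
def scv (a : ℤ → OK) (n : ℕ) (s : ℤ) : OK := bseq a n + s • bseq a (n + 1)

lemma scv_emb1 (D : ℕ) (n : ℕ) (s : ℤ) :
    emb1 D (scv a n s) = emb1 D (bseq a n) + (s : ℝ) * emb1 D (bseq a (n + 1)) := by
  rw [scv, emb1_add, emb1_smul]

lemma scv_emb2 (D : ℕ) (n : ℕ) (s : ℤ) :
    emb2 D (scv a n s) = emb2 D (bseq a n) + (s : ℝ) * emb2 D (bseq a (n + 1)) := by
  rw [scv, emb2_add, emb2_smul]

variable (hD : 2 ≤ D) (hsq : Squarefree D) (hCF : CFData D u γ) (hconv : ConvData D u a)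
  (n : ℕ) (hne : Even n)

include hD hCF hconv

lemma scv_emb1_pos (s : ℤ) (hs : 0 ≤ s) : 0 < emb1 D (scv a n s) := by
  rw [scv_emb1]
  have h1 := (emb1_bseq hD hCF hconv n).1
  have h2 : 0 < emb1 D (bseq a (n+1)) := (emb1_bseq hD hCF hconv (n+1)).1
  have : (0:ℝ) ≤ (s:ℝ) := by exact_mod_cast hs
  nlinarith

lemma scv_emb1_lt (s s' : ℤ) (hss : s < s') :
    emb1 D (scv a n s) < emb1 D (scv a n s') := by
  rw [scv_emb1, scv_emb1]
  have h2 : 0 < emb1 D (bseq a (n+1)) := (emb1_bseq hD hCF hconv (n+1)).1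
  have : (s:ℝ) + 1 ≤ (s':ℝ) := by exact_mod_cast hss
  nlinarith

include hne

lemma emb2_bn : emb2 D (bseq a n) = Qp γ n := by
  rw [emb2_bseq hD hCF hconv n, hne.neg_one_pow, one_mul]

lemma emb2_bn1 : emb2 D (bseq a (n+1)) = -Qp γ (n+1) := by
  rw [emb2_bseq hD hCF hconv (n+1), (hne.add_one).neg_one_pow]
  ring

lemma scv_emb2' (s : ℤ) :
    emb2 D (scv a n s) = Qp γ n - (s : ℝ) * Qp γ (n + 1) := by
  rw [scv_emb2, emb2_bn hD hCF hconv n hne, emb2_bn1 hD hCF hconv n hne]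
  ring

lemma scv_emb2_pos (s : ℤ) (hs0 : 0 ≤ s) (hsN : s ≤ (u (n+1) : ℤ)) :
    0 < emb2 D (scv a n s) := by
  rw [scv_emb2' hD hCF hconv n hne]
  have hstep := Qp_step hCF n
  have h1 : 0 < Qp γ (n+1) := Qp_pos hCF (n+1)
  have h2 : 0 < Qp γ (n+2) := Qp_pos hCF (n+2)
  have h3 : (s:ℝ) ≤ (u (n+1) : ℝ) := by exact_mod_cast hsN
  nlinarith

lemma scv_emb2_lt (s s' : ℤ) (hss : s < s') :
    emb2 D (scv a n s') < emb2 D (scv a n s) := by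
  rw [scv_emb2' hD hCF hconv n hne, scv_emb2' hD hCF hconv n hne]
  have h1 : 0 < Qp γ (n+1) := Qp_pos hCF (n+1)
  have : (s:ℝ) + 1 ≤ (s':ℝ) := by exact_mod_cast hss
  nlinarith

lemma scv_tp (s : ℤ) (hs0 : 0 ≤ s) (hsN : s ≤ (u (n+1) : ℤ)) : TotPos D (scv a n s) :=
  ⟨scv_emb1_pos hD hCF hconv n s hs0, scv_emb2_pos hD hCF hconv n hne s hs0 hsN⟩

lemma det_scv (s : ℤ) : det2 (scv a n s) (scv a n (s + 1)) = 1 := by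
  have h := det_bseq hconv n
  have h2 : det2 (scv a n s) (scv a n (s+1)) = det2 (bseq a n) (bseq a (n+1)) := by
    unfold det2 scv
    simp only [ad_fst, ad_snd, sm_fst, sm_snd]
    ring
  rw [h2, h, hne.neg_one_pow]

lemma pos_coord (x : OK) (c d : ℤ) (hx : TotPos D x)
    (hrep : x = c • bseq a n + d • bseq a (n + 1)) : 1 ≤ c := by
  by_contra hc
  push_neg at hc
  have hc' : (c : ℝ) ≤ 0 := by exact_mod_cast (by omega : c ≤ 0)
  have h2 : emb2 D x = (c:ℝ) * Qp γ n + (d:ℝ) * (-(Qp γ (n+1))) := by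
    rw [hrep, emb2_add, emb2_smul, emb2_smul, emb2_bn hD hCF hconv n hne,
      emb2_bn1 hD hCF hconv n hne]
    try ring
  have h1 : emb1 D x = (c:ℝ) * emb1 D (bseq a n) + (d:ℝ) * emb1 D (bseq a (n+1)) := by
    rw [hrep, emb1_add, emb1_smul, emb1_smul]
  have hQn : 0 < Qp γ n := Qp_pos hCF n
  have hQn1 : 0 < Qp γ (n+1) := Qp_pos hCF (n+1)
  have hd : (d : ℝ) < 0 := by nlinarith [hx.2]
  have hd' : (d : ℤ) ≤ -1 := by
    have : (d:ℤ) < 0 := by exact_mod_cast hd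
    omega
  have hd'' : (d : ℝ) ≤ -1 := by exact_mod_cast hd'
  have hA := (emb1_bseq hD hCF hconv n).1
  have hB : 0 < emb1 D (bseq a (n+1)) := (emb1_bseq hD hCF hconv (n+1)).1
  nlinarith [hx.1]

lemma scv_indec (s : ℤ) (hs0 : 0 ≤ s) (hsN : s ≤ (u (n+1) : ℤ)) :
    Indec D (scv a n s) := by
  refine ⟨scv_tp hD hCF hconv n hne s hs0 hsN, ?_⟩
  rintro ⟨x, y, hx, hy, hxy⟩
  have hdet : det2 (bseq a n) (bseq a (n+1)) = 1 := by
    rw [det_bseq hconv n, hne.neg_one_pow]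
  have hrepx := basisRep hdet x
  set c := x.1 * (bseq a (n+1)).2 - x.2 * (bseq a (n+1)).1 with hc
  set d := (bseq a n).1 * x.2 - (bseq a n).2 * x.1 with hd
  have hc1 : 1 ≤ c := pos_coord hD hCF hconv n hne x c d hx hrepx
  have hrepy : y = (1 - c) • bseq a n + (s - d) • bseq a (n+1) := by
    have hy' : y = scv a n s - x := by rw [hxy]; abel
    rw [hy', hrepx, scv]
    refine ok_ext ?_ ?_ <;> simp only [ad_fst, ad_snd, sb_fst, sb_snd, sm_fst, sm_snd] <;> ring
  have hc2 : 1 ≤ 1 - c := pos_coord hD hCF hconv n hne y _ _ hy hrepy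
  omega

include hsq

lemma scv_between (g : OK) (s : ℤ) (hs0 : 0 ≤ s) (hsN : s + 1 ≤ (u (n+1) : ℤ))
    (hg : TotPos D g) (hlo : emb1 D (scv a n s) < emb1 D g)
    (hhi : emb1 D g < emb1 D (scv a n (s+1))) : ¬ Indec D g := by
  intro hind
  -- first, emb2 g > emb2 (scv s)
  have hYgt : emb2 D (scv a n s) < emb2 D g := by
    rcases lt_trichotomy (emb2 D g) (emb2 D (scv a n s)) with hlt | heq | hgt
    · exfalso
      -- box emptiness
      have hdet2 := det_scv hD hCF hconv n hne s
      have hrep := basisRep hdet2 g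
      set c := g.1 * (scv a n (s+1)).2 - g.2 * (scv a n (s+1)).1 with hcdef
      set d := (scv a n s).1 * g.2 - (scv a n s).2 * g.1 with hddef
      set x0 := emb1 D (scv a n s) with hx0
      set x1 := emb1 D (scv a n (s+1)) with hx1
      set y0 := emb2 D (scv a n s) with hy0
      set y1 := emb2 D (scv a n (s+1)) with hy1
      have hx0p : 0 < x0 := scv_emb1_pos hD hCF hconv n s hs0
      have hx01 : x0 < x1 := scv_emb1_lt hD hCF hconv n s (s+1) (by omega)
      have hy1p : 0 < y1 := scv_emb2_pos hD hCF hconv n hne (s+1) (by omega) hsN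
      have hy01 : y1 < y0 := scv_emb2_lt hD hCF hconv n hne s (s+1) (by omega)
      have hg1 : emb1 D g = (c:ℝ) * x0 + (d:ℝ) * x1 := by
        rw [hx0, hx1, hrep, emb1_add, emb1_smul, emb1_smul]
      have hg2 : emb2 D g = (c:ℝ) * y0 + (d:ℝ) * y1 := by
        rw [hy0, hy1, hrep, emb2_add, emb2_smul, emb2_smul]
      have hge1 : 0 < emb1 D g := hg.1
      have hge2 : 0 < emb2 D g := hg.2
      rcases le_or_gt c 0 with hcs | hcs <;> rcases le_or_gt d 0 with hds | hds
      · -- c ≤ 0, d ≤ 0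
        have hc' : (c:ℝ) ≤ 0 := by exact_mod_cast hcs
        have hd' : (d:ℝ) ≤ 0 := by exact_mod_cast hds
        nlinarith
      · -- c ≤ 0, d ≥ 1
        have hc' : (c:ℝ) ≤ 0 := by exact_mod_cast hcs
        have hd' : (1:ℝ) ≤ (d:ℝ) := by exact_mod_cast hds
        -- from emb2 > 0 : c + d ≥ 1
        have h1 : (0:ℝ) < ((c:ℝ) + d) * y1 := by nlinarith
        have h2 : (0:ℝ) < (c:ℝ) + d := by nlinarith
        have h3 : (1:ℤ) ≤ c + d := by
          have : (0:ℤ) < c + d := by exact_mod_cast h2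
          omega
        have h4 : (1:ℝ) ≤ (c:ℝ) + d := by exact_mod_cast h3
        -- then emb1 g ≥ x1, contradiction with hhi
        nlinarith
      · -- c ≥ 1, d ≤ 0
        have hc' : (1:ℝ) ≤ (c:ℝ) := by exact_mod_cast hcs
        have hd' : (d:ℝ) ≤ 0 := by exact_mod_cast hds
        have h1 : (0:ℝ) < ((c:ℝ) + d) * x0 := by nlinarith
        have h2 : (0:ℝ) < (c:ℝ) + d := by nlinarith
        have h3 : (1:ℤ) ≤ c + d := by
          have : (0:ℤ) < c + d := by exact_mod_cast h2
          omega
        have h4 : (1:ℝ) ≤ (c:ℝ) + d := by exact_mod_cast h3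
        -- then emb2 g ≥ y0, contradiction with hlt
        nlinarith
      · -- c ≥ 1, d ≥ 1
        have hc' : (1:ℝ) ≤ (c:ℝ) := by exact_mod_cast hcs
        have hd' : (1:ℝ) ≤ (d:ℝ) := by exact_mod_cast hds
        nlinarith
    · exfalso
      have : g = scv a n s := emb2_inj hD hsq heq
      rw [this] at hlo
      exact lt_irrefl _ hlo
    · exact hgt
  have htpdiff : TotPos D (g - scv a n s) := by
    constructor
    · rw [emb1_sub]; linarith
    · rw [emb2_sub]; linarith
  exact hind.2 ⟨scv a n s, g - scv a n s,
    scv_tp hD hCF hconv n hne s hs0 (by omega), htpdiff, by abel⟩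

end Geom

end Stmt3Aux

namespace Stmt3Aux

lemma chain_step {G : Type*} [AddCommGroup G] {X1 X2 Y1 Y2 Z1 Z2 T : G}
    (h1 : (2:ℤ) • X1 = Z1 + Y1) (h2 : (2:ℤ) • X2 = Y2 + Z2)
    (hS1 : X1 + X2 = T) (hS0 : Y1 + Y2 = T) : Z1 + Z2 = T := by
  have e : Z1 + Z2 = (2:ℤ) • X1 + (2:ℤ) • X2 - (Y1 + Y2) := by rw [h1, h2]; abel
  rw [e, ← smul_add, hS1, hS0, two_zsmul]; abel

end Stmt3Aux

open Stmt3Aux in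
/-- `p_K(2β_j|I) = min{r+1, u_{i+2}-r+1}` and
`p_K(β_j+β_{j+1}|I) = min{r+1, u_{i+2}-r}` for `β_j = α_{i,r}`. -/
theorem stmt3 (D : ℕ) (hD : 2 ≤ D) (hsq : Squarefree D)
    (u : ℕ → ℕ) (γ : ℕ → ℝ) (hCF : CFData D u γ)
    (a : ℤ → OK) (hconv : ConvData D u a)
    (β : ℤ → OK) (v : ℤ → ℤ) (hβ : BetaSeq D β v)
    (i : ℤ) (hi : -1 ≤ i) (hodd : Odd i)
    (r : ℤ) (hr0 : 0 ≤ r) (hr1 : r ≤ (u (i + 2).toNat : ℤ) - 1)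
    (j : ℤ) (hj : β j = semiconv a i r) :
    pKI D (β j + β j) = (min (r + 1) ((u (i + 2).toNat : ℤ) - r + 1)).toNat ∧
    pKI D (β j + β (j + 1)) = (min (r + 1) ((u (i + 2).toNat : ℤ) - r)).toNat := by
  classical
  obtain ⟨k0, hk0⟩ := hodd
  have hn0 : 0 ≤ i + 1 := by omega
  set n : ℕ := (i + 1).toNat with hndef
  have hni : (n : ℤ) = i + 1 := Int.toNat_of_nonneg hn0
  have hne : Even n := by
    have h1 : Even ((n : ℤ)) := by rw [hni, hk0]; exact ⟨k0 + 1, by ring⟩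
    exact_mod_cast h1
  have hiN : (i + 2).toNat = n + 1 := by omega
  rw [hiN] at hr1 ⊢
  set N : ℕ := u (n + 1) with hNdef
  have hN1 : 1 ≤ N := u_pos hCF n
  set Mz : ℤ := (N : ℤ) - r with hMdef
  have hM1 : 1 ≤ Mz := by omega
  -- identification of the starting point
  have hai : a i = bseq a n := by unfold bseq; congr 1; omega
  have hai1 : a (i + 1) = bseq a (n + 1) := by unfold bseq; congr 1; omega
  have hp : β j = scv a n r := by rw [hj, semiconv, hai, hai1]; rfl
  -- window, upwards
  have hwinup : ∀ m : ℕ, (m : ℤ) ≤ Mz → β (j + (m:ℤ)) = scv a n (r + (m:ℤ)) := by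
    intro m
    induction m with
    | zero => intro _; simpa using hp
    | succ m ih =>
      intro hm
      have hmc : ((m+1 : ℕ) : ℤ) = (m:ℤ) + 1 := by push_cast; ring
      rw [hmc] at hm
      have hprev := ih (by omega)
      have hind : Indec D (scv a n (r + (m:ℤ) + 1)) :=
        scv_indec hD hCF hconv n hne _ (by omega) (by omega)
      obtain ⟨j', hj'⟩ := hβ.surj _ hind
      have hlt : j + (m:ℤ) < j' := by
        refine hβ.mono.lt_iff_lt.mp ?_
        show emb1 D (β (j + (m:ℤ))) < emb1 D (β j')
        rw [hprev, hj']
        exact scv_emb1_lt hD hCF hconv n _ _ (by omega)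
      have hjj : j' = j + (m:ℤ) + 1 := by
        by_contra hcon
        have h2 : j + (m:ℤ) + 1 < j' := by omega
        refine scv_between hD hsq hCF hconv n hne (β (j + (m:ℤ) + 1)) (r + (m:ℤ))
          (by omega) (by omega) (hβ.indec _).1 ?_ ?_ (hβ.indec _)
        · rw [← hprev]
          exact hβ.mono (by omega)
        · have h3 : emb1 D (β (j + (m:ℤ) + 1)) < emb1 D (β j') := hβ.mono h2
          rw [hj'] at h3
          exact h3
      rw [hmc, show j + ((m:ℤ) + 1) = j + (m:ℤ) + 1 by ring,
        show r + ((m:ℤ) + 1) = r + (m:ℤ) + 1 by ring, ← hjj, hj']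
  -- window, downwards
  have hwindown : ∀ m : ℕ, (m : ℤ) ≤ r → β (j - (m:ℤ)) = scv a n (r - (m:ℤ)) := by
    intro m
    induction m with
    | zero => intro _; simpa using hp
    | succ m ih =>
      intro hm
      have hmc : ((m+1 : ℕ) : ℤ) = (m:ℤ) + 1 := by push_cast; ring
      rw [hmc] at hm
      have hprev := ih (by omega)
      have hind : Indec D (scv a n (r - (m:ℤ) - 1)) :=
        scv_indec hD hCF hconv n hne _ (by omega) (by omega)
      obtain ⟨j', hj'⟩ := hβ.surj _ hind
      have hlt : j' < j - (m:ℤ) := by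
        refine hβ.mono.lt_iff_lt.mp ?_
        show emb1 D (β j') < emb1 D (β (j - (m:ℤ)))
        rw [hprev, hj']
        exact scv_emb1_lt hD hCF hconv n _ _ (by omega)
      have hjj : j' = j - (m:ℤ) - 1 := by
        by_contra hcon
        have h2 : j' < j - (m:ℤ) - 1 := by omega
        refine scv_between hD hsq hCF hconv n hne (β (j - (m:ℤ) - 1)) (r - (m:ℤ) - 1)
          (by omega) (by omega) (hβ.indec _).1 ?_ ?_ (hβ.indec _)
        · rw [← hj']
          exact hβ.mono h2
        · have h3 : emb1 D (β (j - (m:ℤ) - 1)) < emb1 D (β (j - (m:ℤ))) :=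
            hβ.mono (by omega)
          rw [hprev] at h3
          rw [show r - (m:ℤ) - 1 + 1 = r - (m:ℤ) by ring]
          exact h3
      rw [hmc, show j - ((m:ℤ) + 1) = j - (m:ℤ) - 1 by ring,
        show r - ((m:ℤ) + 1) = r - (m:ℤ) - 1 by ring, ← hjj, hj']
  -- full window
  have hwin : ∀ t : ℤ, -r ≤ t → t ≤ Mz → β (j + t) = scv a n (r + t) := by
    intro t h1 h2
    rcases le_or_gt 0 t with ht | ht
    · have hc : ((t.toNat : ℕ) : ℤ) = t := Int.toNat_of_nonneg ht
      have := hwinup t.toNat (by omega)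
      rwa [hc] at this
    · have hc : (((-t).toNat : ℕ) : ℤ) = -t := Int.toNat_of_nonneg (by omega)
      have := hwindown (-t).toNat (by omega)
      rw [hc, show j - -t = j + t by ring, show r - -t = r + t by ring] at this
      exact this
  -- v in the interior
  have hApos := (emb1_bseq hD hCF hconv n).1
  have hAB := (emb1_bseq hD hCF hconv n).2
  have hBpos : 0 < emb1 D (bseq a (n+1)) := (emb1_bseq hD hCF hconv (n+1)).1
  have hvmid : ∀ t : ℤ, -r < t → t < Mz → v (j + t) = 2 := by
    intro t h1 h2
    have hrel := hβ.rel (j + t)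
    rw [show j + t - 1 = j + (t - 1) by ring, show j + t + 1 = j + (t + 1) by ring,
      hwin t (by omega) (by omega), hwin (t-1) (by omega) (by omega),
      hwin (t+1) (by omega) (by omega)] at hrel
    have h3 := congrArg (emb1 D) hrel
    rw [emb1_smul, emb1_add, scv_emb1, scv_emb1, scv_emb1] at h3
    have hXpos : 0 < emb1 D (bseq a n) + ((r + t : ℤ) : ℝ) * emb1 D (bseq a (n+1)) := by
      have := scv_emb1_pos hD hCF hconv n (r+t) (by omega)
      rwa [scv_emb1] at this
    have h4 : ((v (j+t) : ℝ) - 2) *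
        (emb1 D (bseq a n) + ((r + t : ℤ) : ℝ) * emb1 D (bseq a (n+1))) = 0 := by
      push_cast at h3 ⊢
      linear_combination h3
    have h5 : (v (j+t) : ℝ) = 2 := by
      rcases mul_eq_zero.mp h4 with h | h
      · linarith
      · exact absurd h (ne_of_gt hXpos)
    exact_mod_cast h5
  -- v at the left end
  have hvleft : v (j - r) ≠ 2 := by
    intro hv
    have hv' : v (j + -r) = 2 := by rw [show j + -r = j - r by ring]; exact hv
    have hrel := hβ.rel (j + -r)
    rw [hv', show j + -r + 1 = j + (-r + 1) by ring,
      hwin (-r) (by omega) (by omega), hwin (-r+1) (by omega) (by omega),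
      show r + -r = 0 by ring, show r + (-r + 1) = 1 by ring] at hrel
    have h3 := congrArg (emb1 D) hrel
    rw [emb1_smul, emb1_add, scv_emb1, scv_emb1] at h3
    have h4 : 0 < emb1 D (β (j + -r - 1)) := (hβ.indec _).1.1
    push_cast at h3
    nlinarith
  -- v at the right end
  have hQn1 : 0 < Qp γ (n+1) := Qp_pos hCF (n+1)
  have hQdec : Qp γ (n+2) < Qp γ (n+1) := Qp_dec hCF (n+1)
  have hQstep := Qp_step hCF n
  have hvright : v (j + Mz) ≠ 2 := by
    intro hv
    have hrel := hβ.rel (j + Mz)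
    rw [hv, show j + Mz - 1 = j + (Mz - 1) by ring,
      hwin Mz (by omega) (by omega), hwin (Mz-1) (by omega) (by omega)] at hrel
    have h3 := congrArg (emb2 D) hrel
    rw [emb2_smul, emb2_add, scv_emb2' hD hCF hconv n hne,
      scv_emb2' hD hCF hconv n hne] at h3
    have h4 : 0 < emb2 D (β (j + Mz + 1)) := (hβ.indec _).1.2
    have h5 : r + Mz = (N : ℤ) := by omega
    rw [h5, show r + (Mz - 1) = (N:ℤ) - 1 by omega] at h3
    push_cast at h3
    nlinarith
  -- the linear functional σ
  set p : OK := scv a n r with hpdef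
  set q : OK := scv a n (r + 1) with hqdef
  have hdetpq : p.1 * q.2 - p.2 * q.1 = 1 := det_scv hD hCF hconv n hne r
  set σf : OK → ℤ := fun g => (g.1 * q.2 - g.2 * q.1) + (p.1 * g.2 - p.2 * g.1) with hσdef
  have σ_add : ∀ x y : OK, σf (x + y) = σf x + σf y := by
    intro x y; simp only [hσdef, ad_fst, ad_snd]; ring
  have σ_smul : ∀ (c : ℤ) (x : OK), σf (c • x) = c * σf x := by
    intro c x; simp only [hσdef, sm_fst, sm_snd]; ring
  have σ_zero : σf 0 = 0 := by simp [hσdef]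
  have σ_p : σf p = 1 := by simp only [hσdef]; linear_combination hdetpq
  have σ_q : σf q = 1 := by simp only [hσdef]; linear_combination hdetpq
  have hcomb : ∀ t : ℤ, scv a n (r + t) = (1 - t) • p + t • q := by
    intro t
    simp only [hpdef, hqdef, scv]
    refine ok_ext ?_ ?_ <;> simp only [ad_fst, ad_snd, sm_fst, sm_snd] <;> ring
  have σ_sc : ∀ t : ℤ, σf (scv a n (r + t)) = 1 := by
    intro t
    rw [hcomb t, σ_add, σ_smul, σ_smul, σ_p, σ_q]; ring
  -- β j and β (j+1)
  have hq : β (j + 1) = q := by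
    have := hwin 1 (by omega) (by omega)
    rwa [hqdef]
  have hp' : β j = p := hp
  -- the sequences of σ-values
  set s1 : ℕ → ℤ := fun m => σf (β (j + (m:ℤ))) with hs1def
  set s2 : ℕ → ℤ := fun m => σf (β (j - (m:ℤ))) with hs2def
  have hs1_0 : s1 0 = 1 := by
    show σf (β (j + ((0:ℕ):ℤ))) = 1
    rw [show j + ((0:ℕ):ℤ) = j by norm_num, hp', σ_p]
  have hs1_1 : s1 1 = 1 := by
    show σf (β (j + ((1:ℕ):ℤ))) = 1
    rw [show j + ((1:ℕ):ℤ) = j + 1 by norm_num, hq, σ_q]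
  have hs2_0 : s2 0 = 1 := by
    show σf (β (j - ((0:ℕ):ℤ))) = 1
    rw [show j - ((0:ℕ):ℤ) = j by norm_num, hp', σ_p]
  have hs2_1 : s2 1 = v j - 1 := by
    show σf (β (j - ((1:ℕ):ℤ))) = v j - 1
    have hrel := hβ.rel j
    have h2 := congrArg σf hrel
    rw [σ_smul, σ_add, hp', σ_p, show j + 1 = j + ((1:ℕ):ℤ) by norm_num] at h2
    rw [show j + ((1:ℕ):ℤ) = j + 1 by norm_num, hq, σ_q] at h2
    rw [show j - ((1:ℕ):ℤ) = j - 1 by norm_num]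
    omega
  have hs1rec : ∀ m : ℕ, s1 (m + 2) = v (j + (m:ℤ) + 1) * s1 (m + 1) - s1 m := by
    intro m
    have hrel := hβ.rel (j + (m:ℤ) + 1)
    have h2 := congrArg σf hrel
    rw [σ_smul, σ_add] at h2
    rw [show j + (m:ℤ) + 1 - 1 = j + (m:ℤ) by ring,
      show j + (m:ℤ) + 1 + 1 = j + ((m+2:ℕ):ℤ) by push_cast; ring] at h2
    show σf (β (j + ((m+2:ℕ):ℤ))) = v (j + (m:ℤ) + 1) * σf (β (j + ((m+1:ℕ):ℤ))) - σf (β (j + (m:ℤ)))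
    rw [show j + ((m+1:ℕ):ℤ) = j + (m:ℤ) + 1 by push_cast; ring]
    omega
  have hs2rec : ∀ m : ℕ, s2 (m + 2) = v (j - (m:ℤ) - 1) * s2 (m + 1) - s2 m := by
    intro m
    have hrel := hβ.rel (j - (m:ℤ) - 1)
    have h2 := congrArg σf hrel
    rw [σ_smul, σ_add] at h2
    rw [show j - (m:ℤ) - 1 - 1 = j - ((m+2:ℕ):ℤ) by push_cast; ring,
      show j - (m:ℤ) - 1 + 1 = j - (m:ℤ) by ring] at h2
    show σf (β (j - ((m+2:ℕ):ℤ))) = v (j - (m:ℤ) - 1) * σf (β (j - ((m+1:ℕ):ℤ))) - σf (β (j - (m:ℤ)))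
    rw [show j - ((m+1:ℕ):ℤ) = j - (m:ℤ) - 1 by push_cast; ring]
    omega
  have hs1ge := rec_mono s1 (fun m => v (j + (m:ℤ) + 1)) (fun m => hβ.v_two_le _)
    hs1rec (by omega) (by omega)
  have hs1mono := rec_mono_le s1 (fun m => v (j + (m:ℤ) + 1)) (fun m => hβ.v_two_le _)
    hs1rec (by omega) (by omega)
  have hs2ge := rec_mono s2 (fun m => v (j - (m:ℤ) - 1)) (fun m => hβ.v_two_le _)
    hs2rec (by omega) (by have := hβ.v_two_le j; omega)
  have hs2mono := rec_mono_le s2 (fun m => v (j - (m:ℤ) - 1)) (fun m => hβ.v_two_le _)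
    hs2rec (by omega) (by have := hβ.v_two_le j; omega)
  -- σ-values inside the window are 1
  have hs1win : ∀ m : ℕ, (m:ℤ) ≤ Mz → s1 m = 1 := by
    intro m hm
    show σf (β (j + (m:ℤ))) = 1
    rw [hwin (m:ℤ) (by omega) hm, σ_sc]
  have hs2win : ∀ m : ℕ, (m:ℤ) ≤ r → s2 m = 1 := by
    intro m hm
    show σf (β (j - (m:ℤ))) = 1
    rw [show j - (m:ℤ) = j + (-(m:ℤ)) by ring, hwin (-(m:ℤ)) (by omega) (by omega),
      show r + -(m:ℤ) = r + (-(m:ℤ)) by ring, σ_sc]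
  -- σ-values beyond the window are at least 2
  have hs1beyond : 2 ≤ s1 (Mz.toNat + 1) := by
    have hMn : ((Mz.toNat : ℕ) : ℤ) = Mz := Int.toNat_of_nonneg (by omega)
    have hMn1 : 1 ≤ Mz.toNat := by omega
    have hrec := hs1rec (Mz.toNat - 1)
    rw [show Mz.toNat - 1 + 2 = Mz.toNat + 1 by omega,
      show Mz.toNat - 1 + 1 = Mz.toNat by omega] at hrec
    have hv : v (j + ((Mz.toNat - 1 : ℕ) : ℤ) + 1) = v (j + Mz) := by congr 1; omega
    have hw1 : s1 Mz.toNat = 1 := hs1win _ (by omega)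
    have hw2 : s1 (Mz.toNat - 1) = 1 := hs1win _ (by omega)
    have hv3 := hβ.v_two_le (j + Mz)
    rw [hv, hw1, hw2] at hrec
    have := hvright
    omega
  have hs2beyond : 2 ≤ s2 (r.toNat + 1) := by
    have hrn : ((r.toNat : ℕ) : ℤ) = r := Int.toNat_of_nonneg hr0
    rcases Nat.eq_zero_or_pos r.toNat with h0 | h1
    · have hreq : r = 0 := by omega
      have hvj : v j ≠ 2 := by
        have := hvleft
        rwa [hreq, sub_zero] at this
      have hv2 := hβ.v_two_le j
      have h9 : s2 (r.toNat + 1) = v j - 1 := by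
        rw [h0, show (0:ℕ) + 1 = 1 from rfl]; exact hs2_1
      omega
    · have hrec := hs2rec (r.toNat - 1)
      rw [show r.toNat - 1 + 2 = r.toNat + 1 by omega,
        show r.toNat - 1 + 1 = r.toNat by omega] at hrec
      have hv : v (j - ((r.toNat - 1 : ℕ) : ℤ) - 1) = v (j - r) := by congr 1; omega
      have hw1 : s2 r.toNat = 1 := hs2win _ (by omega)
      have hw2 : s2 (r.toNat - 1) = 1 := hs2win _ (by omega)
      have hv3 := hβ.v_two_le (j - r)
      rw [hv, hw1, hw2] at hrec
      have := hvleft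
      omega
  -- classification of indecomposables by σ-value
  have hβinj : Function.Injective β := fun x y h => hβ.mono.injective (congrArg (emb1 D) h)
  have hpart : ∀ x : OK, Indec D x → 1 ≤ σf x ∧
      (σf x = 1 → ∃ t : ℤ, -r ≤ t ∧ t ≤ Mz ∧ x = β (j + t) ∧ x = (1 - t) • p + t • q) := by
    intro x hx
    obtain ⟨t', ht'⟩ := hβ.surj x hx
    rcases le_or_gt j t' with hc | hc
    · have hm : (((t' - j).toNat : ℕ) : ℤ) = t' - j := Int.toNat_of_nonneg (by omega)
      have hxm : x = β (j + (((t' - j).toNat : ℕ) : ℤ)) := by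
        rw [hm, ← ht']; congr 1; ring
      have h1 : σf x = s1 (t' - j).toNat := by rw [hxm]
      constructor
      · rw [h1]; exact (hs1ge _).1
      · intro hone
        have hbound : ((t' - j).toNat : ℤ) ≤ Mz := by
          by_contra hcon
          push_neg at hcon
          have h3 : Mz.toNat + 1 ≤ (t' - j).toNat := by omega
          have h4 := hs1mono _ _ h3
          omega
        refine ⟨((t' - j).toNat : ℤ), by omega, hbound, hxm, ?_⟩
        rw [hxm, hwin _ (by omega) hbound, hcomb]
    · have hm : (((j - t').toNat : ℕ) : ℤ) = j - t' := Int.toNat_of_nonneg (by omega)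
      have hxm : x = β (j - (((j - t').toNat : ℕ) : ℤ)) := by
        rw [hm, ← ht']; congr 1; ring
      have h1 : σf x = s2 (j - t').toNat := by rw [hxm]
      constructor
      · rw [h1]; exact (hs2ge _).1
      · intro hone
        have hbound : ((j - t').toNat : ℤ) ≤ r := by
          by_contra hcon
          push_neg at hcon
          have h3 : r.toNat + 1 ≤ (j - t').toNat := by omega
          have h4 := hs2mono _ _ h3
          omega
        refine ⟨-(((j - t').toNat : ℕ) : ℤ), by omega, by omega, ?_, ?_⟩
        · rw [hxm]; congr 1; try ring
        · rw [hxm, show j - (((j - t').toNat : ℕ) : ℤ) = j + (-(((j - t').toNat : ℕ) : ℤ)) by ring,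
            hwin _ (by omega) (by omega), hcomb]
  -- multiset lemmas
  have hmapsum : ∀ s : Multiset OK, σf s.sum = (s.map σf).sum := by
    intro s
    refine Multiset.induction_on s ?_ ?_
    · simpa using σ_zero
    · intro x s ih
      simp only [Multiset.sum_cons, Multiset.map_cons, σ_add, ih]
  have hcardle : ∀ s : Multiset OK, (∀ x ∈ s, Indec D x) →
      (Multiset.card s : ℤ) ≤ (s.map σf).sum := by
    intro s
    refine Multiset.induction_on s ?_ ?_
    · intro _; simp
    · intro x s ih h
      have h1 := (hpart x (h x (Multiset.mem_cons_self x s))).1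
      have h2 := ih (fun y hy => h y (Multiset.mem_cons_of_mem hy))
      simp only [Multiset.card_cons, Multiset.map_cons, Multiset.sum_cons]
      push_cast
      omega
  -- chains of two-element representations
  have hsum2 : ∀ m : ℕ, (m:ℤ) ≤ r → (m:ℤ) ≤ Mz →
      β (j - (m:ℤ)) + β (j + (m:ℤ)) = β j + β j := by
    have key : ∀ m : ℕ,
        ((m:ℤ) ≤ r → (m:ℤ) ≤ Mz → β (j - (m:ℤ)) + β (j + (m:ℤ)) = β j + β j) ∧
        ((m:ℤ)+1 ≤ r → (m:ℤ)+1 ≤ Mz → β (j - ((m:ℤ)+1)) + β (j + ((m:ℤ)+1)) = β j + β j) := by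
      intro m
      induction m with
      | zero =>
        constructor
        · intro _ _
          rw [show j - ((0:ℕ):ℤ) = j by norm_num, show j + ((0:ℕ):ℤ) = j by norm_num]
        · intro h1 h2
          have hv0 : v j = 2 := by
            have := hvmid 0 (by omega) (by omega)
            rwa [add_zero] at this
          have hrel := hβ.rel j
          rw [hv0] at hrel
          rw [show j - (((0:ℕ):ℤ)+1) = j - 1 by norm_num,
            show j + (((0:ℕ):ℤ)+1) = j + 1 by norm_num, ← hrel, two_zsmul]
      | succ m ih =>
        constructor
        · intro h1 h2
          rw [show ((m+1:ℕ):ℤ) = (m:ℤ)+1 by push_cast; ring] at h1 h2 ⊢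
          exact ih.2 h1 h2
        · intro h1 h2
          rw [show ((m+1:ℕ):ℤ) = (m:ℤ)+1 by push_cast; ring] at h1 h2 ⊢
          have hS1 : β (j - ((m:ℤ)+1)) + β (j + ((m:ℤ)+1)) = β j + β j :=
            ih.2 (by omega) (by omega)
          have hS0 : β (j - (m:ℤ)) + β (j + (m:ℤ)) = β j + β j :=
            ih.1 (by omega) (by omega)
          have hva : v (j + (-((m:ℤ)+1))) = 2 := hvmid (-((m:ℤ)+1)) (by omega) (by omega)
          have hvb : v (j + ((m:ℤ)+1)) = 2 := hvmid ((m:ℤ)+1) (by omega) (by omega)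
          have hra := hβ.rel (j + (-((m:ℤ)+1)))
          rw [hva] at hra
          have hrb := hβ.rel (j + ((m:ℤ)+1))
          rw [hvb] at hrb
          rw [show j + (-((m:ℤ)+1)) - 1 = j - ((m:ℤ)+1+1) by ring,
            show j + (-((m:ℤ)+1)) + 1 = j - (m:ℤ) by ring,
            show j + (-((m:ℤ)+1)) = j - ((m:ℤ)+1) by ring] at hra
          rw [show j + ((m:ℤ)+1) - 1 = j + (m:ℤ) by ring,
            show j + ((m:ℤ)+1) + 1 = j + ((m:ℤ)+1+1) by ring] at hrb
          rw [show (m:ℤ)+1+1 = ((m:ℤ)+1)+1 by ring] at hra hrb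
          exact chain_step hra hrb hS1 hS0
    intro m h1 h2
    exact (key m).1 h1 h2
  have hsum1 : ∀ m : ℕ, (m:ℤ) ≤ r → (m:ℤ)+1 ≤ Mz →
      β (j - (m:ℤ)) + β (j + 1 + (m:ℤ)) = β j + β (j+1) := by
    have key : ∀ m : ℕ,
        ((m:ℤ) ≤ r → (m:ℤ)+1 ≤ Mz → β (j - (m:ℤ)) + β (j + 1 + (m:ℤ)) = β j + β (j+1)) ∧
        ((m:ℤ)+1 ≤ r → (m:ℤ)+2 ≤ Mz →
          β (j - ((m:ℤ)+1)) + β (j + 1 + ((m:ℤ)+1)) = β j + β (j+1)) := by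
      intro m
      induction m with
      | zero =>
        constructor
        · intro _ _
          rw [show j - ((0:ℕ):ℤ) = j by norm_num, show j + 1 + ((0:ℕ):ℤ) = j + 1 by norm_num]
        · intro h1 h2
          have hva : v j = 2 := by
            have := hvmid 0 (by omega) (by omega)
            rwa [add_zero] at this
          have hvb : v (j + 1) = 2 := hvmid 1 (by omega) (by omega)
          have hra := hβ.rel j
          rw [hva] at hra
          have hrb := hβ.rel (j + 1)
          rw [hvb, show j + 1 - 1 = j by ring] at hrb
          rw [show j - (((0:ℕ):ℤ)+1) = j - 1 by norm_num,
            show j + 1 + (((0:ℕ):ℤ)+1) = j + 1 + 1 by norm_num]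
          exact chain_step hra hrb rfl (add_comm _ _)
        | succ m ih =>
          constructor
          · intro h1 h2
            rw [show ((m+1:ℕ):ℤ) = (m:ℤ)+1 by push_cast; ring] at h1 h2 ⊢
            exact ih.2 h1 h2
          · intro h1 h2
            rw [show ((m+1:ℕ):ℤ) = (m:ℤ)+1 by push_cast; ring] at h1 h2 ⊢
            have hS1 : β (j - ((m:ℤ)+1)) + β (j + 1 + ((m:ℤ)+1)) = β j + β (j+1) :=
              ih.2 (by omega) (by omega)
            have hS0 : β (j - (m:ℤ)) + β (j + 1 + (m:ℤ)) = β j + β (j+1) :=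
              ih.1 (by omega) (by omega)
            have hva : v (j + (-((m:ℤ)+1))) = 2 := hvmid (-((m:ℤ)+1)) (by omega) (by omega)
            have hvb : v (j + ((m:ℤ)+2)) = 2 := hvmid ((m:ℤ)+2) (by omega) (by omega)
            have hra := hβ.rel (j + (-((m:ℤ)+1)))
            rw [hva] at hra
            have hrb := hβ.rel (j + ((m:ℤ)+2))
            rw [hvb] at hrb
            rw [show j + (-((m:ℤ)+1)) - 1 = j - (((m:ℤ)+1)+1) by ring,
              show j + (-((m:ℤ)+1)) + 1 = j - (m:ℤ) by ring,
              show j + (-((m:ℤ)+1)) = j - ((m:ℤ)+1) by ring] at hra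
            rw [show j + ((m:ℤ)+2) - 1 = j + 1 + (m:ℤ) by ring,
              show j + ((m:ℤ)+2) + 1 = j + 1 + (((m:ℤ)+1)+1) by ring,
              show j + ((m:ℤ)+2) = j + 1 + ((m:ℤ)+1) by ring] at hrb
            rw [show (m:ℤ)+1+1 = ((m:ℤ)+1)+1 by ring]
            exact chain_step hra hrb hS1 hS0
    intro m h1 h2
    exact (key m).1 h1 h2
  -- counting the representations of 2 β j
  have count2 : pKI D (β j + β j) = (min r Mz).toNat + 1 := by
    set K : ℕ := (min r Mz).toNat with hK
    have hKr : (K:ℤ) = min r Mz := Int.toNat_of_nonneg (le_min hr0 (by omega))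
    set F : ℕ → Multiset OK := fun k => {β (j - (k:ℤ)), β (j + (k:ℤ))} with hF
    have hFmem : ∀ (x : OK) (k : ℕ), x ∈ F k ↔ x = β (j - (k:ℤ)) ∨ x = β (j + (k:ℤ)) := by
      intro x k; rw [hF]; simp
    have hFsum : ∀ k : ℕ, (F k).sum = β (j - (k:ℤ)) + β (j + (k:ℤ)) := by
      intro k; rw [hF]; simp
    have hseteq : {s : Multiset OK | (∀ x ∈ s, Indec D x) ∧ s.sum = β j + β j}
        = ↑((Finset.range (K+1)).image F) := by
      ext s
      simp only [Set.mem_setOf_eq, Finset.coe_image, Set.mem_image, Finset.mem_coe,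
        Finset.mem_range]
      constructor
      · rintro ⟨hind, hsum⟩
        have hσsum : (s.map σf).sum = 2 := by
          rw [← hmapsum, hsum, σ_add, hp', σ_p]; norm_num
        have hcard : Multiset.card s ≤ 2 := by
          have h1 := hcardle s hind
          rw [hσsum] at h1
          exact_mod_cast h1
        have hc3 : Multiset.card s = 0 ∨ Multiset.card s = 1 ∨ Multiset.card s = 2 := by omega
        rcases hc3 with h0 | h1 | h2
        · exfalso
          rw [Multiset.card_eq_zero] at h0
          rw [h0] at hσsum
          simp at hσsum
        · exfalso
          rw [Multiset.card_eq_one] at h1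
          obtain ⟨x, hxs⟩ := h1
          rw [hxs] at hsum hind
          simp only [Multiset.sum_singleton] at hsum
          exact (hind x (by simp)).2 ⟨β j, β j, (hβ.indec j).1, (hβ.indec j).1, hsum⟩
        · rw [Multiset.card_eq_two] at h2
          obtain ⟨x, y, hxy⟩ := h2
          have hxind : Indec D x := hind x (by rw [hxy]; simp)
          have hyind : Indec D y := hind y (by rw [hxy]; simp)
          have hsum2' : x + y = β j + β j := by
            rw [hxy] at hsum
            simpa using hsum
          have hσ2 : σf x + σf y = 2 := by
            rw [hxy] at hσsum
            simpa using hσsum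
          have hx1 := (hpart x hxind).1
          have hy1 := (hpart y hyind).1
          obtain ⟨t1, ht1a, ht1b, ht1c, ht1d⟩ := (hpart x hxind).2 (by omega)
          obtain ⟨t2, ht2a, ht2b, ht2c, ht2d⟩ := (hpart y hyind).2 (by omega)
          have hteq : t1 + t2 = 0 := by
            rw [ht1d, ht2d, hp'] at hsum2'
            have e1 := congrArg Prod.fst hsum2'
            have e2 := congrArg Prod.snd hsum2'
            simp only [ad_fst, ad_snd, sm_fst, sm_snd] at e1 e2
            linear_combination (-p.2) * e1 + p.1 * e2 - (t1 + t2) * hdetpq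
          rcases le_or_gt t1 0 with hts | hts
          · refine ⟨(-t1).toNat, by omega, ?_⟩
            have hk1 : (((-t1).toNat : ℕ) : ℤ) = -t1 := Int.toNat_of_nonneg (by omega)
            show ({β (j - (((-t1).toNat : ℕ) : ℤ)), β (j + (((-t1).toNat : ℕ) : ℤ))}
              : Multiset OK) = s
            rw [show j - (((-t1).toNat : ℕ) : ℤ) = j + t1 by omega,
              show j + (((-t1).toNat : ℕ) : ℤ) = j + t2 by omega, ← ht1c, ← ht2c, hxy]
          · refine ⟨t1.toNat, by omega, ?_⟩
            have hk1 : ((t1.toNat : ℕ) : ℤ) = t1 := Int.toNat_of_nonneg (by omega)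
            show ({β (j - ((t1.toNat : ℕ) : ℤ)), β (j + ((t1.toNat : ℕ) : ℤ))}
              : Multiset OK) = s
            rw [show j - ((t1.toNat : ℕ) : ℤ) = j + t2 by omega,
              show j + ((t1.toNat : ℕ) : ℤ) = j + t1 by omega, ← ht1c, ← ht2c, hxy]
            exact Multiset.pair_comm _ _
      · rintro ⟨k, hk, hFk⟩
        have hkb : (k:ℤ) ≤ min r Mz := by omega
        constructor
        · intro x hxk
          rw [← hFk] at hxk
          rcases (hFmem x k).mp hxk with h | h <;> (rw [h]; exact hβ.indec _)
        · rw [← hFk, hFsum]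
          exact hsum2 k (by omega) (by omega)
    rw [pKI, hseteq, Set.ncard_coe_finset]
    rw [Finset.card_image_of_injOn, Finset.card_range]
    intro k1 h1 k2 h2 heq
    have hmem : β (j - (k1:ℤ)) ∈ F k2 := by
      rw [← heq]
      exact (hFmem _ _).mpr (Or.inl rfl)
    rcases (hFmem _ _).mp hmem with h | h
    · have := hβinj h; omega
    · have := hβinj h; omega
  -- counting the representations of β j + β (j+1)
  have count1 : pKI D (β j + β (j+1)) = (min r (Mz - 1)).toNat + 1 := by
    set K : ℕ := (min r (Mz - 1)).toNat with hK
    have hKr : (K:ℤ) = min r (Mz - 1) := Int.toNat_of_nonneg (le_min hr0 (by omega))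
    set F : ℕ → Multiset OK := fun k => {β (j - (k:ℤ)), β (j + 1 + (k:ℤ))} with hF
    have hFmem : ∀ (x : OK) (k : ℕ), x ∈ F k ↔ x = β (j - (k:ℤ)) ∨ x = β (j + 1 + (k:ℤ)) := by
      intro x k; rw [hF]; simp
    have hFsum : ∀ k : ℕ, (F k).sum = β (j - (k:ℤ)) + β (j + 1 + (k:ℤ)) := by
      intro k; rw [hF]; simp
    have hqtp : TotPos D (β (j+1)) := (hβ.indec (j+1)).1
    have hptp : TotPos D (β j) := (hβ.indec j).1
    have hseteq : {s : Multiset OK | (∀ x ∈ s, Indec D x) ∧ s.sum = β j + β (j+1)}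
        = ↑((Finset.range (K+1)).image F) := by
      ext s
      simp only [Set.mem_setOf_eq, Finset.coe_image, Set.mem_image, Finset.mem_coe,
        Finset.mem_range]
      constructor
      · rintro ⟨hind, hsum⟩
        have hσsum : (s.map σf).sum = 2 := by
          rw [← hmapsum, hsum, σ_add, hp', hq, σ_p, σ_q]; norm_num
        have hcard : Multiset.card s ≤ 2 := by
          have h1 := hcardle s hind
          rw [hσsum] at h1
          exact_mod_cast h1
        have hc3 : Multiset.card s = 0 ∨ Multiset.card s = 1 ∨ Multiset.card s = 2 := by omega
        rcases hc3 with h0 | h1 | h2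
        · exfalso
          rw [Multiset.card_eq_zero] at h0
          rw [h0] at hσsum
          simp at hσsum
        · exfalso
          rw [Multiset.card_eq_one] at h1
          obtain ⟨x, hxs⟩ := h1
          rw [hxs] at hsum hind
          simp only [Multiset.sum_singleton] at hsum
          exact (hind x (by simp)).2 ⟨β j, β (j+1), hptp, hqtp, hsum⟩
        · rw [Multiset.card_eq_two] at h2
          obtain ⟨x, y, hxy⟩ := h2
          have hxind : Indec D x := hind x (by rw [hxy]; simp)
          have hyind : Indec D y := hind y (by rw [hxy]; simp)
          have hsum2' : x + y = β j + β (j+1) := by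
            rw [hxy] at hsum
            simpa using hsum
          have hσ2 : σf x + σf y = 2 := by
            rw [hxy] at hσsum
            simpa using hσsum
          have hx1 := (hpart x hxind).1
          have hy1 := (hpart y hyind).1
          obtain ⟨t1, ht1a, ht1b, ht1c, ht1d⟩ := (hpart x hxind).2 (by omega)
          obtain ⟨t2, ht2a, ht2b, ht2c, ht2d⟩ := (hpart y hyind).2 (by omega)
          have hteq : t1 + t2 = 1 := by
            rw [ht1d, ht2d, hp', hq] at hsum2'
            have e1 := congrArg Prod.fst hsum2'
            have e2 := congrArg Prod.snd hsum2'
            simp only [ad_fst, ad_snd, sm_fst, sm_snd] at e1 e2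
            linear_combination (-p.2) * e1 + p.1 * e2 - (t1 + t2 - 1) * hdetpq
          rcases le_or_gt t1 0 with hts | hts
          · refine ⟨(-t1).toNat, by omega, ?_⟩
            have hk1 : (((-t1).toNat : ℕ) : ℤ) = -t1 := Int.toNat_of_nonneg (by omega)
            show ({β (j - (((-t1).toNat : ℕ) : ℤ)), β (j + 1 + (((-t1).toNat : ℕ) : ℤ))}
              : Multiset OK) = s
            rw [show j - (((-t1).toNat : ℕ) : ℤ) = j + t1 by omega,
              show j + 1 + (((-t1).toNat : ℕ) : ℤ) = j + t2 by omega, ← ht1c, ← ht2c, hxy]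
          · have hts2 : t2 ≤ 0 := by omega
            refine ⟨(-t2).toNat, by omega, ?_⟩
            have hk1 : (((-t2).toNat : ℕ) : ℤ) = -t2 := Int.toNat_of_nonneg (by omega)
            show ({β (j - (((-t2).toNat : ℕ) : ℤ)), β (j + 1 + (((-t2).toNat : ℕ) : ℤ))}
              : Multiset OK) = s
            rw [show j - (((-t2).toNat : ℕ) : ℤ) = j + t2 by omega,
              show j + 1 + (((-t2).toNat : ℕ) : ℤ) = j + t1 by omega, ← ht1c, ← ht2c, hxy]
            exact Multiset.pair_comm _ _
      · rintro ⟨k, hk, hFk⟩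
        have hkb : (k:ℤ) ≤ min r (Mz - 1) := by omega
        constructor
        · intro x hxk
          rw [← hFk] at hxk
          rcases (hFmem x k).mp hxk with h | h <;> (rw [h]; exact hβ.indec _)
        · rw [← hFk, hFsum]
          exact hsum1 k (by omega) (by omega)
    rw [pKI, hseteq, Set.ncard_coe_finset]
    rw [Finset.card_image_of_injOn, Finset.card_range]
    intro k1 h1 k2 h2 heq
    have hmem : β (j - (k1:ℤ)) ∈ F k2 := by
      rw [← heq]
      exact (hFmem _ _).mpr (Or.inl rfl)
    rcases (hFmem _ _).mp hmem with h | h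
    · have := hβinj h; omega
    · have := hβinj h; omega
  constructor
  · rw [count2]
    omega
  · rw [count1]
    omega
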